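/- Goldberg's formula as the coefficient of t in its t-analogue: the coefficient of t in binom(t + s - r, k) equals (-1)^{k-s+r-1} (s-r)!(k-s+r-1)!/k! = ∫_{-1}^0 t^{k} · t^{r-1}(1+t)^{s-r} dt / t^{s}, for integers 1 ≤ r ≤ s ≤ k. -/

import Mathlib

/-!
STATEMENT 19: For integers 1 ≤ r ≤ s ≤ k, the coefficient of t in the polynomial
binom(t + s - r, k) = (t+s-r)(t+s-r-1)⋯(t+s-r-k+1)/k! equals
  (-1)^{k-s+r-1} (s-r)! (k-s+r-1)! / k!  =  ∫_{-1}^0 t^{k-s+r-1} (1+t)^{s-r} dt,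
the Beta-function value (-1)^{k-s+r-1} B(s-r+1, k-s+r).
-/

open Polynomial

/-- The polynomial binom(t + s - r, k) in the variable t (over ℝ). -/
noncomputable def binomPoly (s r k : ℕ) : Polynomial ℝ :=
  Polynomial.C (1 / (Nat.factorial k : ℝ)) *
    ∏ j ∈ Finset.range k, (Polynomial.X + Polynomial.C ((s : ℝ) - (r : ℝ) - (j : ℝ)))

open intervalIntegral in
lemma goldberg_int_aux (m : ℕ) : ∀ n : ℕ, (∫ t in (-1:ℝ)..0, t^n * (1+t)^m) =
    (-1 : ℝ)^n * ((m.factorial : ℝ) * n.factorial / (m+n+1).factorial) := by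
  induction m with
  | zero =>
    intro n
    simp only [pow_zero, mul_one, integral_pow, Nat.factorial_zero, Nat.cast_one, one_mul,
      zero_add]
    have h1 : ((n:ℝ)+1) ≠ 0 := by positivity
    have h2 : (n.factorial : ℝ) ≠ 0 := by positivity
    rw [Nat.factorial_succ]
    push_cast
    field_simp
    rw [pow_succ]
    ring
  | succ m ih =>
    intro n
    have h2 : ((n:ℝ)+1) ≠ 0 := by positivity
    have key := integral_mul_deriv_eq_deriv_mul (a := (-1:ℝ)) (b := 0)
      (u := fun t => (1+t)^(m+1)) (v := fun t => t^(n+1) / ((n:ℝ)+1))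
      (u' := fun t => ((m:ℝ)+1) * (1+t)^m) (v' := fun t => t^n)
      (fun x _ => by
        have := (hasDerivAt_pow (m+1) (1+x)).comp x ((hasDerivAt_id x).const_add 1)
        convert this using 1
        · rfl
        · push_cast; ring)
      (fun x _ => by
        have := (hasDerivAt_pow (n+1) x).div_const ((n:ℝ)+1)
        convert this using 1
        push_cast
        field_simp)
      (by apply Continuous.intervalIntegrable; continuity)
      (by apply Continuous.intervalIntegrable; continuity)
    rw [show (∫ t in (-1:ℝ)..0, t^n * (1+t)^(m+1)) =
        ∫ t in (-1:ℝ)..0, (1+t)^(m+1) * t^n by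
      congr 1; ext t; ring]
    rw [key]
    have e3 : (∫ x in (-1:ℝ)..0, (((m:ℝ)+1) * (1+x)^m) * (x^(n+1)/((n:ℝ)+1))) =
        ((m:ℝ)+1)/((n:ℝ)+1) * ∫ x in (-1:ℝ)..0, x^(n+1) * (1+x)^m := by
      rw [← intervalIntegral.integral_const_mul]
      congr 1; ext x; field_simp
    simp only [e3, ih (n+1)]
    have e1 : m+(n+1)+1 = m+1+n+1 := by ring
    rw [e1]
    have f1 : (Nat.factorial (m+1) : ℝ) = ((m:ℝ)+1) * m.factorial := by
      rw [Nat.factorial_succ]; push_cast; ring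
    have f2 : (Nat.factorial (n+1) : ℝ) = ((n:ℝ)+1) * n.factorial := by
      rw [Nat.factorial_succ]; push_cast; ring
    have hfk : (Nat.factorial (m+1+n+1) : ℝ) ≠ 0 := by positivity
    rw [f1, f2, pow_succ]
    norm_num
    field_simp
    ring

open Finset in
lemma goldberg_prodA (m : ℕ) : (∏ j ∈ range m, ((m:ℝ) - j)) = m.factorial := by
  rw [← Finset.prod_range_add_one_eq_factorial m, Nat.cast_prod]
  rw [← Finset.prod_range_reflect]
  apply Finset.prod_congr rfl
  intro j hj
  rw [Finset.mem_range] at hj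
  have h1 : (1:ℕ) ≤ m - j := by omega
  rw [Nat.sub_sub, Nat.cast_sub (by omega : 1 + j ≤ m)]
  push_cast
  ring

open Finset in
lemma goldberg_prodB (m k : ℕ) (h : m < k) : (∏ j ∈ Finset.Ico (m+1) k, ((m:ℝ) - j)) =
    (-1:ℝ)^(k-m-1) * (k-m-1).factorial := by
  rw [Finset.prod_Ico_eq_prod_range]
  have e : k - (m+1) = k - m - 1 := by omega
  rw [e]
  have : ∀ i ∈ range (k-m-1), ((m:ℝ) - ((m+1+i : ℕ) : ℝ)) = (-1) * (i+1) := by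
    intro i _; push_cast; ring
  rw [Finset.prod_congr rfl this, Finset.prod_mul_distrib, Finset.prod_const]
  rw [show (∏ i ∈ range (k-m-1), ((i:ℝ)+1)) = ((k-m-1).factorial : ℝ) by
    rw [← Finset.prod_range_add_one_eq_factorial, Nat.cast_prod]; push_cast; rfl,
    Finset.card_range]

open Finset in
lemma goldberg_coeff_aux (m k : ℕ) (h : m < k) :
    (∏ j ∈ range k, (X + C ((m:ℝ) - j))).coeff 1 =
      (-1:ℝ)^(k-m-1) * m.factorial * (k-m-1).factorial := by
  rw [← Finset.prod_range_mul_prod_Ico _ (le_of_lt h),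
    Finset.prod_eq_prod_Ico_succ_bot h]
  have hm : (X + C ((m:ℝ) - m)) = X := by simp
  rw [hm]
  set A := ∏ j ∈ range m, (X + C ((m:ℝ) - j)) with hA
  set B := ∏ j ∈ Finset.Ico (m+1) k, (X + C ((m:ℝ) - j)) with hB
  rw [show A * (X * B) = X * (A * B) by ring, Polynomial.coeff_X_mul,
    Polynomial.coeff_zero_eq_eval_zero, Polynomial.eval_mul]
  have eA : A.eval 0 = ∏ j ∈ range m, ((m:ℝ) - j) := by
    simp [hA, Polynomial.eval_prod]
  have eB : B.eval 0 = ∏ j ∈ Finset.Ico (m+1) k, ((m:ℝ) - j) := by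
    simp [hB, Polynomial.eval_prod]
  rw [eA, eB, goldberg_prodA, goldberg_prodB m k h]
  ring

theorem goldberg_linear_coefficient (r s k : ℕ)
    (hr : 1 ≤ r) (hs : r ≤ s) (hk : s ≤ k) :
    (binomPoly s r k).coeff 1 =
        (-1 : ℝ) ^ (k - s + r - 1) *
          ((Nat.factorial (s - r) : ℝ) * (Nat.factorial (k - s + r - 1) : ℝ) /
            (Nat.factorial k : ℝ)) ∧
    (binomPoly s r k).coeff 1 =
        ∫ t in (-1 : ℝ)..0, t ^ (k - s + r - 1) * (1 + t) ^ (s - r) := by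
  set m := s - r with hm
  set n := k - s + r - 1 with hn
  have hmk : m < k := by omega
  have hnm : n = k - m - 1 := by omega
  have hkmn : m + n + 1 = k := by omega
  have hcastm : ((m:ℝ)) = (s:ℝ) - (r:ℝ) := by
    rw [hm, Nat.cast_sub hs]
  have hfk : (k.factorial : ℝ) ≠ 0 := by positivity
  have hcoeff : (binomPoly s r k).coeff 1 =
      (-1:ℝ)^n * ((m.factorial : ℝ) * (n.factorial : ℝ) / (k.factorial : ℝ)) := by
    rw [binomPoly, Polynomial.coeff_C_mul]
    have : (∏ j ∈ Finset.range k, (X + C ((s:ℝ) - (r:ℝ) - (j:ℝ)))) =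
        ∏ j ∈ Finset.range k, (X + C ((m:ℝ) - (j:ℝ))) := by
      apply Finset.prod_congr rfl
      intro j _
      rw [hcastm]
    rw [this, goldberg_coeff_aux m k hmk, ← hnm]
    field_simp
  constructor
  · exact hcoeff
  · rw [hcoeff, goldberg_int_aux m n, hkmn]
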